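/- Let R be a Polish ring and φ : R → ℂ a ring isomorphism. If there exists a Borel set Ω ⊆ ℂ whose interior is nonempty and whose complement also has nonempty interior, such that φ⁻¹[Ω] has the Baire property in R, then φ is a homeomorphism (a topological isomorphism). -/

import Mathlib

open Set Filter Topology Metric

/-- Pettis' theorem: a nonmeager Baire-measurable set `A` in a topological group
has the property that `A - A` is a neighborhood of `0`. -/
theorem pettis_sub {G : Type*} [TopologicalSpace G] [AddCommGroup G] [IsTopologicalAddGroup G]
    [BaireSpace G] {A : Set G} (hA : BaireMeasurableSet A) (hnm : ¬ IsMeagre A) :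
    ∃ U : Set G, IsOpen U ∧ (0 : G) ∈ U ∧ ∀ g ∈ U, ∃ a ∈ A, ∃ b ∈ A, a - b = g := by
  obtain ⟨u, uo, hAu⟩ := hA.residualEq_isOpen
  have hune : u.Nonempty := by
    rcases u.eq_empty_or_nonempty with h | h
    · exfalso
      apply hnm
      subst h
      have h' : {x | x ∈ A ↔ x ∈ (∅ : Set G)} ∈ residual G := by
        filter_upwards [hAu] with x hx
        simp only [eq_iff_iff] at hx
        exact hx
      have : Aᶜ ∈ residual G := by
        apply mem_of_superset h'
        intro x hx
        simp only [mem_setOf_eq, mem_empty_iff_false, iff_false] at hx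
        exact hx
      exact this
    · exact h
  refine ⟨⋃ b ∈ u, (fun x => x + b) ⁻¹' u, ?_, ?_, ?_⟩
  · exact isOpen_biUnion fun b _ => uo.preimage (continuous_id.add continuous_const)
  · obtain ⟨b, hb⟩ := hune
    exact mem_biUnion hb (by simpa using hb)
  · intro g hg
    simp only [mem_iUnion, mem_preimage] at hg
    obtain ⟨b, hb, hgb⟩ := hg
    -- the set u ∩ (· - g) ⁻¹' u is open and nonempty
    have htend : Tendsto (fun x : G => x - g) (residual G) (residual G) := by
      have h' := tendsto_residual_of_isOpenMap (Homeomorph.subRight g).continuous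
        (Homeomorph.subRight g).isOpenMap
      simpa [Homeomorph.subRight, Equiv.subRight] using h'
    have hres : {x : G | (x ∈ A ↔ x ∈ u) ∧ (x - g ∈ A ↔ x - g ∈ u)} ∈ residual G := by
      have h1 : {x : G | x ∈ A ↔ x ∈ u} ∈ residual G := by
        filter_upwards [hAu] with x hx; simp only [eq_iff_iff] at hx; exact hx
      have h2 : {x : G | x - g ∈ A ↔ x - g ∈ u} ∈ residual G := htend h1
      exact inter_mem h1 h2
    have hdense : Dense {x : G | (x ∈ A ↔ x ∈ u) ∧ (x - g ∈ A ↔ x - g ∈ u)} :=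
      dense_of_mem_residual hres
    have hvo : IsOpen (u ∩ (fun x => x - g) ⁻¹' u) :=
      uo.inter (uo.preimage (continuous_id.sub continuous_const))
    have hvne : (u ∩ (fun x => x - g) ⁻¹' u).Nonempty := by
      refine ⟨g + b, hgb, ?_⟩
      simp only [mem_preimage]
      rw [add_sub_cancel_left]
      exact hb
    obtain ⟨x, hx, hxu, hxgu⟩ := hdense.exists_mem_open hvo hvne
    exact ⟨x, hx.1.mpr hxu, x - g, hx.2.mpr hxgu, sub_sub_cancel x g⟩

/-- In a nonempty Baire space, a countable cover has a nonmeager member. -/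
theorem exists_nonmeager {G : Type*} [TopologicalSpace G] [BaireSpace G] [Nonempty G]
    {ι : Type*} {t : Set ι} (htc : t.Countable) {B : ι → Set G}
    (hcov : (⋃ i ∈ t, B i) = univ) : ∃ i ∈ t, ¬ IsMeagre (B i) := by
  by_contra h
  push_neg at h
  have hm : IsMeagre (⋃ i ∈ t, B i) := by
    rw [IsMeagre, compl_iUnion₂]
    exact (countable_bInter_mem htc).2 fun i hi => h i hi
  rw [hcov, IsMeagre, compl_univ] at hm
  have : Dense (∅ : Set G) := dense_of_mem_residual hm
  simpa using this.nonempty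

/-- The preimage of a Baire measurable set under an invertible affine map of a
topological ring is Baire measurable. -/
theorem bp_affine_preimage {R : Type*} [TopologicalSpace R] [Ring R] [IsTopologicalRing R]
    {A : Set R} (hA : BaireMeasurableSet A) (p p' m : R) (h1 : p' * p = 1) (h2 : p * p' = 1) :
    BaireMeasurableSet ((fun x => p * x - m) ⁻¹' A) := by
  let e : R ≃ₜ R :=
    { toFun := fun x => p * x - m
      invFun := fun y => p' * (y + m)
      left_inv := fun x => by simp only []; rw [sub_add_cancel, ← mul_assoc, h1, one_mul]
      right_inv := fun y => by simp only []; rw [← mul_assoc, h2, one_mul, add_sub_cancel_right]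
      continuous_toFun := by fun_prop
      continuous_invFun := by fun_prop }
  exact hA.preimage e.continuous e.isOpenMap

/-- Automatic continuity: a group homomorphism (given as a function commuting with
subtraction) from a nonempty Baire topological group to a separable topological group,
whose preimages of open sets are Baire measurable, is continuous at zero. -/
theorem continuousAt_zero_of_bp {G H : Type*} [TopologicalSpace G] [AddCommGroup G]
    [IsTopologicalAddGroup G] [BaireSpace G] [Nonempty G]
    [TopologicalSpace H] [AddCommGroup H] [IsTopologicalAddGroup H]
    [TopologicalSpace.SeparableSpace H]
    (f : G → H) (hf : ∀ x y, f (x - y) = f x - f y)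
    (hbp : ∀ V : Set H, IsOpen V → BaireMeasurableSet (f ⁻¹' V)) :
    ContinuousAt f 0 := by
  have hf0 : f 0 = 0 := by
    have := hf 0 0; rwa [sub_zero, sub_self] at this
  rw [ContinuousAt, hf0]
  intro W hW
  obtain ⟨V₀, hV₀o, hV₀mem, hV₀⟩ := exists_open_nhds_zero_half hW
  set V : Set H := V₀ ∩ (-V₀) with hV
  have hVo : IsOpen V := hV₀o.inter hV₀o.neg
  have hV0 : (0 : H) ∈ V := ⟨hV₀mem, by simpa using hV₀mem⟩
  have hVsub : ∀ v ∈ V, ∀ w ∈ V, v - w ∈ W := by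
    intro v hv w hw
    have : -w ∈ V₀ := hw.2
    simpa [sub_eq_add_neg] using hV₀ v hv.1 (-w) this
  obtain ⟨D, hDc, hDd⟩ := TopologicalSpace.exists_countable_dense H
  set B : H → Set G := fun q => f ⁻¹' {y | y - q ∈ V} with hB
  have hBbp : ∀ q, BaireMeasurableSet (B q) := by
    intro q
    apply hbp
    exact hVo.preimage (continuous_id.sub continuous_const)
  have hcov : (⋃ q ∈ D, B q) = univ := by
    apply eq_univ_of_forall
    intro x
    have : ({y | f x - y ∈ V} : Set H).Nonempty := ⟨f x, by simpa using hV0⟩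
    obtain ⟨q, hqD, hq⟩ := hDd.exists_mem_open
      (hVo.preimage (continuous_const.sub continuous_id)) this
    exact mem_biUnion hqD hq
  obtain ⟨q, -, hqnm⟩ := exists_nonmeager hDc hcov
  obtain ⟨U, hUo, hU0, hU⟩ := pettis_sub (hBbp q) hqnm
  apply mem_of_superset (hUo.mem_nhds hU0)
  intro g hg
  obtain ⟨a, ha, b, hb, hab⟩ := hU g hg
  have : f g = (f a - q) - (f b - q) := by
    rw [← hab, hf]; abel
  rw [mem_preimage, this]
  exact hVsub _ ha _ hb

noncomputable section

/-- a ring isomorphism from a Polish ring to `C` is a homeomorphism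
provided some suitable Borel set has Baire-measurable preimage. -/
theorem stmt18 (R : Type) [TopologicalSpace R] [Ring R] [IsTopologicalRing R] [PolishSpace R]
    (φ : R ≃+* ℂ) (Ω : Set ℂ) (hmeas : MeasurableSet Ω)
    (h₁ : (interior Ω).Nonempty) (h₂ : (interior Ωᶜ).Nonempty)
    (hBP : BaireMeasurableSet (⇑φ ⁻¹' Ω)) :
    Continuous ⇑φ ∧ Continuous ⇑φ.symm := by
  haveI : BaireSpace R := by
    letI := TopologicalSpace.upgradeIsCompletelyMetrizable R
    infer_instance
  haveI : Nonempty R := ⟨φ.symm 0⟩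
  set A : Set R := ⇑φ ⁻¹' Ω with hA
  -- geometry of Ω
  obtain ⟨z₀, hz₀⟩ := h₁
  obtain ⟨r, hr, hball₀⟩ := Metric.isOpen_iff.1 isOpen_interior z₀ hz₀
  have hΩ₀ : ball z₀ r ⊆ Ω := hball₀.trans interior_subset
  obtain ⟨z₁, hz₁⟩ := h₂
  obtain ⟨s₀, hs₀, hball₁⟩ := Metric.isOpen_iff.1 isOpen_interior z₁ hz₁
  have hΩ₁' : ball z₁ s₀ ⊆ Ωᶜ := hball₁.trans interior_subset
  set d : ℂ := z₀ - z₁ with hd_def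
  have hdne : d ≠ 0 := sub_ne_zero.2 (by
    rintro rfl
    exact (hΩ₁' (mem_ball_self hs₀)) (hΩ₀ (mem_ball_self hr)))
  set nd : ℝ := ‖d‖ with hnd_def
  have hnd : 0 < nd := norm_pos_iff.2 hdne
  set s : ℝ := min s₀ nd with hs_def
  have hs : 0 < s := lt_min hs₀ hnd
  have hΩ₁ : ball z₁ s ⊆ Ωᶜ := (ball_subset_ball (min_le_left _ _)).trans hΩ₁'
  have hsnd : s ≤ nd := min_le_right _ _
  set κ : ℝ := s / nd with hκ_def
  have hκ : 0 < κ := div_pos hs hnd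
  have hκ1 : κ ≤ 1 := (div_le_one hnd).2 hsnd
  set L : ℝ := nd / r with hL_def
  have hL : 0 < L := div_pos hnd hr
  set M : ℝ := 2 * L with hM_def
  have hM : 0 < M := by positivity
  -- the affine maps
  set a : ℂ → ℂ := fun c => -c / d with ha_def
  set b : ℂ → ℂ := fun c => c * z₀ / d with hb_def
  have hT₀ : ∀ c : ℂ, a c * z₀ + b c = 0 := by
    intro c; simp only [ha_def, hb_def]; field_simp; ring
  have hT₁ : ∀ c : ℂ, a c * z₁ + b c = c := by
    intro c; simp only [ha_def, hb_def]
    field_simp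
    rw [hd_def]; ring
  have hane : ∀ c : ℂ, c ≠ 0 → a c ≠ 0 := fun c hc =>
    div_ne_zero (neg_ne_zero.2 hc) hdne
  have hanorm : ∀ c : ℂ, ‖a c‖ = ‖c‖ / nd := by
    intro c; simp only [ha_def]; rw [norm_div, norm_neg, hnd_def]
  -- the distance computation
  have hdist : ∀ c : ℂ, c ≠ 0 → ∀ w z : ℂ,
      ‖(w - b c) / a c - z‖ = ‖w - (a c * z + b c)‖ / ‖a c‖ := by
    intro c hc w z
    have h1 : (w - b c) / a c - z = (w - (a c * z + b c)) / a c := by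
      field_simp [hane c hc]
      ring
    rw [h1, norm_div]
  set Sc : ℂ → Set ℂ := fun c => {w | (w - b c) / a c ∈ Ω} with hSc_def
  -- interior inclusion
  have hSin : ∀ c : ℂ, L ≤ ‖c‖ → ball (0 : ℂ) 1 ⊆ Sc c := by
    intro c hc w hw
    have hc0 : c ≠ 0 := by
      intro h; rw [h, norm_zero] at hc; exact absurd hc (not_le.2 hL)
    have hac := hane c hc0
    have hacpos : 0 < ‖a c‖ := norm_pos_iff.2 hac
    show (w - b c) / a c ∈ Ω
    apply hΩ₀
    rw [mem_ball, dist_eq_norm, hdist c hc0 w z₀, hT₀ c, sub_zero, div_lt_iff₀ hacpos]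
    rw [mem_ball, dist_zero_right] at hw
    have h1 : 1 ≤ r * ‖a c‖ := by
      rw [hanorm, ← mul_div_assoc, le_div_iff₀ hnd, one_mul]
      have h2 : nd ≤ ‖c‖ * r := (div_le_iff₀ hr).1 hc
      linarith
    exact lt_of_lt_of_le hw h1
  -- exterior exclusion
  have hSout : ∀ c : ℂ, c ≠ 0 → ∀ w : ℂ, ‖w - c‖ < ‖a c‖ * s → w ∉ Sc c := by
    intro c hc0 w hw hmem
    have hac := hane c hc0
    have hacpos : 0 < ‖a c‖ := norm_pos_iff.2 hac
    have : (w - b c) / a c ∈ ball z₁ s := by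
      rw [mem_ball, dist_eq_norm, hdist c hc0 w z₁, hT₁ c, div_lt_iff₀ hacpos, mul_comm]
      exact hw
    exact (hΩ₁ this) hmem
  -- countable dense set and the bounded set V
  obtain ⟨Q, hQc, hQd⟩ := TopologicalSpace.exists_countable_dense ℂ
  set Cset : Set ℂ := {c ∈ Q | L ≤ ‖c‖} with hCset_def
  have hCsetc : Cset.Countable := hQc.mono (sep_subset _ _)
  have hCne : ∀ c ∈ Cset, c ≠ 0 := by
    intro c hc h
    have h2 := hc.2
    rw [h, norm_zero] at h2
    exact absurd h2 (not_le.2 hL)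
  set ρ : ℝ := min r 1 with hρ_def
  have hρ : 0 < ρ := lt_min hr one_pos
  set V : Set ℂ := {w | w + z₀ ∈ Ω} ∩ ⋂ c ∈ Cset, Sc c with hV_def
  have hVball : ball (0 : ℂ) ρ ⊆ V := by
    intro w hw
    rw [mem_ball, dist_zero_right] at hw
    constructor
    · apply hΩ₀
      rw [mem_ball, dist_eq_norm]
      have : w + z₀ - z₀ = w := by ring
      rw [this]
      exact lt_of_lt_of_le hw (min_le_left _ _)
    · rw [mem_iInter₂]
      intro c hc
      apply hSin c hc.2
      rw [mem_ball, dist_zero_right]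
      exact lt_of_lt_of_le hw (min_le_right _ _)
  have hVbdd : ∀ w ∈ V, ‖w‖ ≤ M := by
    intro w hw
    by_contra hcon
    push_neg at hcon
    have hw0 : 0 < ‖w‖ := lt_trans hM hcon
    have hrad : 0 < κ * ‖w‖ / 4 := by positivity
    obtain ⟨c, hcQ, hcball⟩ := hQd.exists_mem_open isOpen_ball ⟨w, mem_ball_self hrad⟩
    rw [mem_ball] at hcball
    have hwc : ‖w - c‖ < κ * ‖w‖ / 4 := by
      rw [← dist_eq_norm, dist_comm]
      exact hcball
    have hwc' : ‖w‖ - ‖c‖ ≤ ‖w - c‖ := norm_sub_norm_le w c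
    have hcge : 3 / 4 * ‖w‖ ≤ ‖c‖ := by nlinarith
    have hcL : L ≤ ‖c‖ := by nlinarith
    have hcC : c ∈ Cset := ⟨hcQ, hcL⟩
    have hc0 : c ≠ 0 := hCne c hcC
    apply hSout c hc0 w ?_ (by exact (mem_iInter₂.1 hw.2) c hcC)
    rw [hanorm]
    have heq : ‖c‖ / nd * s = κ * ‖c‖ := by rw [hκ_def]; ring
    rw [heq]
    nlinarith
  -- the translated preimage sets
  set B : ℂ → Set R := fun q => ⇑φ ⁻¹' {w | w - q ∈ V} with hB_def
  have hBbp : ∀ q : ℂ, BaireMeasurableSet (B q) := by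
    intro q
    have hVtr : {w : ℂ | w - q ∈ V} =
        {w | w - q + z₀ ∈ Ω} ∩ ⋂ c ∈ Cset, {w | (w - q - b c) / a c ∈ Ω} := by
      ext w
      simp only [hV_def, mem_setOf_eq, mem_inter_iff, mem_iInter, hSc_def, sub_sub]
    have hpre1 : ⇑φ ⁻¹' {w : ℂ | w - q + z₀ ∈ Ω} =
        (fun x : R => 1 * x - φ.symm (q - z₀)) ⁻¹' A := by
      ext x
      have key1 : φ (1 * x - φ.symm (q - z₀)) = φ x - q + z₀ := by
        rw [one_mul, map_sub, RingEquiv.apply_symm_apply]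
        ring
      simp only [mem_preimage, mem_setOf_eq, hA, key1]
    have hpre2 : ∀ c ∈ Cset, ⇑φ ⁻¹' {w : ℂ | (w - q - b c) / a c ∈ Ω} =
        (fun x : R => φ.symm ((a c)⁻¹) * x - φ.symm ((a c)⁻¹ * (q + b c))) ⁻¹' A := by
      intro c _
      ext x
      have key2 : φ (φ.symm ((a c)⁻¹) * x - φ.symm ((a c)⁻¹ * (q + b c)))
          = (φ x - q - b c) / a c := by
        rw [map_sub, map_mul, RingEquiv.apply_symm_apply, RingEquiv.apply_symm_apply,
          div_eq_mul_inv]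
        ring
      simp only [mem_preimage, mem_setOf_eq, hA, key2]
    rw [hB_def]
    simp only []
    rw [hVtr, preimage_inter, preimage_iInter₂]
    apply BaireMeasurableSet.inter
    · rw [hpre1]
      exact bp_affine_preimage hBP 1 1 (φ.symm (q - z₀)) (one_mul 1) (one_mul 1)
    · apply BaireMeasurableSet.biInter hCsetc
      intro c hc
      rw [hpre2 c hc]
      have hac := hane c (hCne c hc)
      refine bp_affine_preimage hBP (φ.symm ((a c)⁻¹)) (φ.symm (a c)) (φ.symm ((a c)⁻¹ * (q + b c))) ?_ ?_
      · rw [← map_mul, mul_inv_cancel₀ hac, map_one]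
      · rw [← map_mul, inv_mul_cancel₀ hac, map_one]
  -- covering
  have hBcov : (⋃ q ∈ Q, B q) = univ := by
    apply eq_univ_of_forall
    intro x
    obtain ⟨q, hqQ, hq⟩ := hQd.exists_mem_open isOpen_ball ⟨φ x, mem_ball_self hρ⟩
    refine mem_biUnion hqQ ?_
    show φ x - q ∈ V
    apply hVball
    rw [mem_ball] at hq ⊢
    rw [dist_zero_right, ← dist_eq_norm, dist_comm]
    exact hq
  obtain ⟨q₀, -, hq₀nm⟩ := exists_nonmeager hQc hBcov
  obtain ⟨U, hUo, hU0, hU⟩ := pettis_sub (hBbp q₀) hq₀nm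
  -- image of U is bounded
  have hUbdd : ∀ g ∈ U, ‖φ g‖ ≤ 2 * M := by
    intro g hg
    obtain ⟨x, hx, y, hy, hxy⟩ := hU g hg
    have hphix : ‖φ x - q₀‖ ≤ M := hVbdd _ hx
    have hphiy : ‖φ y - q₀‖ ≤ M := hVbdd _ hy
    have : φ g = (φ x - q₀) - (φ y - q₀) := by
      rw [← hxy, map_sub]; ring
    rw [this]
    calc ‖(φ x - q₀) - (φ y - q₀)‖ ≤ ‖φ x - q₀‖ + ‖φ y - q₀‖ := norm_sub_le _ _
    _ ≤ 2 * M := by linarith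
  -- continuity of φ at 0
  have hcont0 : ContinuousAt (⇑φ) 0 := by
    rw [ContinuousAt, map_zero, Metric.tendsto_nhds]
    intro ε hε
    set t : ℝ := ε / (2 * M + 1) with ht_def
    have ht : 0 < t := by positivity
    have htne : (t : ℂ) ≠ 0 := by
      simp only [ne_eq, Complex.ofReal_eq_zero]
      exact ne_of_gt ht
    set N : Set R := (fun x : R => φ.symm (((t : ℂ))⁻¹) * x) ⁻¹' U with hN_def
    have hNnhds : N ∈ 𝓝 (0 : R) := by
      apply (hUo.preimage (continuous_const.mul continuous_id)).mem_nhds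
      show φ.symm (((t : ℂ))⁻¹) * 0 ∈ U
      rw [mul_zero]
      exact hU0
    filter_upwards [hNnhds] with x hx
    have h1 : ‖φ (φ.symm (((t : ℂ))⁻¹) * x)‖ ≤ 2 * M := hUbdd _ hx
    rw [map_mul, RingEquiv.apply_symm_apply] at h1
    have h2 : ‖φ x‖ = ‖(t : ℂ)‖ * ‖((t : ℂ))⁻¹ * φ x‖ := by
      rw [← norm_mul, ← mul_assoc, mul_inv_cancel₀ htne, one_mul]
    have h3 : ‖(t : ℂ)‖ = t := by
      rw [Complex.norm_real]; exact Real.norm_of_nonneg ht.le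
    rw [dist_zero_right, h2, h3]
    have h4 : t * ‖((t : ℂ))⁻¹ * φ x‖ ≤ t * (2 * M) := by
      apply mul_le_mul_of_nonneg_left h1 (le_of_lt ht)
    have h5 : t * (2 * M) < ε := by
      rw [ht_def]
      rw [div_mul_eq_mul_div, div_lt_iff₀ (by positivity : (0:ℝ) < 2 * M + 1)]
      nlinarith
    linarith
  have hcont : Continuous ⇑φ := by
    have := continuous_of_continuousAt_zero (AddMonoidHom.mk' ⇑φ (map_add φ)) hcont0
    exact this
  refine ⟨hcont, ?_⟩
  -- the inverse is Borel measurable by Lusin–Suslin, hence Baire measurable,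
  -- hence continuous by Pettis' theorem
  borelize R
  have hemb : MeasurableEmbedding ⇑φ := hcont.measurableEmbedding φ.injective
  have hmeassymm : Measurable ⇑φ.symm := by
    intro u hu
    have himg : ⇑φ.symm ⁻¹' u = ⇑φ '' u := by
      ext w
      constructor
      · intro hw
        exact ⟨φ.symm w, hw, φ.apply_symm_apply w⟩
      · rintro ⟨x, hx, rfl⟩
        rwa [mem_preimage, RingEquiv.symm_apply_apply]
    rw [himg]
    exact hemb.measurableSet_image.2 hu
  have hsymm0 : ContinuousAt (⇑φ.symm) 0 := by
    apply continuousAt_zero_of_bp (⇑φ.symm) (fun x y => map_sub φ.symm x y)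
    intro W hW
    exact (hmeassymm hW.measurableSet).baireMeasurableSet
  exact continuous_of_continuousAt_zero (AddMonoidHom.mk' ⇑φ.symm (map_add φ.symm)) hsymm0

end
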